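/- Let ν ∈ ℝ, a > 0, m ∈ ℕ, λ = (ν + 2m)/a with λ > -1, and let f_l(r) = (2^{λ+1} l! / (a^λ Γ(λ + l + 1)))^{1/2} r^m L_l^{(λ)}((2/a) r^a) e^{-(1/a) r^a} (with the convention f_{-1} = 0). Then for every l ∈ ℕ and r > 0, -(i/2)( ((ν + a)/a) f_l(r) + (2/a) r f_l'(r) ) - (i/(2a)) r^a f_l(r) - (i/(2a)) r^{-a}( r² f_l''(r) + (ν + 1) r f_l'(r) - m(ν + m) f_l(r) ) = i √(l(λ + l)) · f_{l-1}(r); that is, the lowering operator π(𝐧⁻) = -(i/2) H_a - (1/2) E⁺_a - (1/2) E⁻_{a,m} sends f_l to i √(l(λ+l)) f_{l-1}. -/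

import Mathlib

open Real Complex

/-- The generalized Laguerre polynomial
`L_l^{(λ)}(t) = ∑_{j=0}^{l} ((-1)^j / (j!(l-j)!)) (Γ(λ+l+1)/Γ(λ+j+1)) t^j`. -/
noncomputable def laguerre (lam : ℝ) (l : ℕ) (t : ℝ) : ℝ :=
  ∑ j ∈ Finset.range (l + 1),
    (-1 : ℝ) ^ j / (j.factorial * (l - j).factorial) *
      (Real.Gamma (lam + l + 1) / Real.Gamma (lam + j + 1)) * t ^ j

/-- `f_l(r) = (2^{λ+1} l!/(a^λ Γ(λ+l+1)))^{1/2} r^m L_l^{(λ)}((2/a) r^a) e^{-(1/a) r^a}`,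
indexed by integers, with the convention `f_{-1} = 0`. -/
noncomputable def laguerreFun (ν a : ℝ) (m : ℕ) (l : ℤ) (r : ℝ) : ℂ :=
  if l < 0 then 0 else
  ((Real.sqrt ((2 : ℝ) ^ ((ν + 2 * m) / a + 1) * (l.toNat).factorial /
        (a ^ ((ν + 2 * m) / a) * Real.Gamma ((ν + 2 * m) / a + l.toNat + 1))) *
      r ^ m * laguerre ((ν + 2 * m) / a) l.toNat ((2 / a) * r ^ a) *
      Real.exp (-(1 / a) * r ^ a) : ℝ) : ℂ)


noncomputable def lagD (lam : ℝ) (l : ℕ) (t : ℝ) : ℝ :=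
  ∑ j ∈ Finset.range (l + 1),
    (-1 : ℝ) ^ j / (j.factorial * (l - j).factorial) *
      (Real.Gamma (lam + l + 1) / Real.Gamma (lam + j + 1)) * ((j : ℝ) * t ^ (j - 1))

noncomputable def lagD2 (lam : ℝ) (l : ℕ) (t : ℝ) : ℝ :=
  ∑ j ∈ Finset.range (l + 1),
    (-1 : ℝ) ^ j / (j.factorial * (l - j).factorial) *
      (Real.Gamma (lam + l + 1) / Real.Gamma (lam + j + 1)) *
        ((j : ℝ) * (((j - 1 : ℕ) : ℝ) * t ^ (j - 1 - 1)))

lemma hasDerivAt_laguerre (lam : ℝ) (l : ℕ) (t : ℝ) :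
    HasDerivAt (laguerre lam l) (lagD lam l t) t := by
  unfold laguerre lagD
  exact HasDerivAt.fun_sum fun j _ => (hasDerivAt_pow j t).const_mul _

lemma hasDerivAt_lagD (lam : ℝ) (l : ℕ) (t : ℝ) :
    HasDerivAt (lagD lam l) (lagD2 lam l t) t := by
  unfold lagD lagD2
  exact HasDerivAt.fun_sum fun j _ =>
    (((hasDerivAt_pow (j - 1) t).const_mul (j : ℝ)).const_mul _)

lemma pow_shift (t : ℝ) (i : ℕ) : t * ((i:ℝ) * t ^ (i - 1)) = (i:ℝ) * t ^ i := by
  cases i with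
  | zero => simp
  | succ s => push_cast; rw [pow_succ]; ring

lemma coeff_key (lam : ℝ) (hlam : -1 < lam) (l i : ℕ) :
    ((i : ℝ) + 1) * (lam + i + 1) *
      ((-1 : ℝ) ^ (i + 1) / ((i + 1).factorial * (l - i).factorial) *
        (Real.Gamma (lam + l + 1 + 1) / Real.Gamma (lam + i + 1 + 1)))
      = -(lam + l + 1) *
        ((-1 : ℝ) ^ i / (i.factorial * (l - i).factorial) *
          (Real.Gamma (lam + l + 1) / Real.Gamma (lam + i + 1))) := by
  have hil : (0:ℝ) < lam + i + 1 := by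
    have := Nat.cast_nonneg (α := ℝ) i; linarith
  have hll : (0:ℝ) < lam + l + 1 := by
    have := Nat.cast_nonneg (α := ℝ) l; linarith
  rw [Real.Gamma_add_one hll.ne', Real.Gamma_add_one hil.ne', Nat.factorial_succ]
  have h1 : Real.Gamma (lam + i + 1) ≠ 0 := (Real.Gamma_pos_of_pos hil).ne'
  have h2 : (i.factorial : ℝ) ≠ 0 := Nat.cast_ne_zero.2 i.factorial_ne_zero
  have h3 : ((l - i).factorial : ℝ) ≠ 0 := Nat.cast_ne_zero.2 (l - i).factorial_ne_zero
  field_simp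
  push_cast
  ring

lemma lag_key (lam : ℝ) (hlam : -1 < lam) (l : ℕ) (t : ℝ) :
    t * lagD2 lam (l + 1) t + (lam + 1) * lagD lam (l + 1) t
      = -(lam + l + 1) * laguerre lam l t := by
  unfold lagD lagD2 laguerre
  rw [Finset.mul_sum, Finset.mul_sum, ← Finset.sum_add_distrib, Finset.mul_sum,
    Finset.sum_range_succ']
  simp only [Nat.cast_zero, zero_mul, mul_zero, add_zero, Nat.add_sub_cancel,
    Nat.succ_sub_succ, Nat.sub_zero]
  refine Finset.sum_congr rfl fun i _ => ?_
  cases i with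
  | zero =>
    have hc := coeff_key lam hlam l 0
    push_cast at hc ⊢
    ring_nf at hc ⊢
    linear_combination hc
  | succ s =>
    have hc := coeff_key lam hlam l (s + 1)
    simp only [Nat.add_sub_cancel]
    push_cast at hc ⊢
    ring_nf at hc ⊢
    linear_combination t ^ (s + 1) * hc

lemma lagD_zero (lam t : ℝ) : lagD lam 0 t = 0 := by simp [lagD]

lemma lagD2_zero (lam t : ℝ) : lagD2 lam 0 t = 0 := by simp [lagD2]

lemma hasDerivAt_lagfun (C lam a : ℝ) (ha : a ≠ 0) (m l : ℕ) (r : ℝ) (hr : 0 < r) :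
    HasDerivAt
      (fun s : ℝ => C * (s ^ (m:ℝ) *
        (laguerre lam l ((2/a) * s^a) * Real.exp (-(1/a) * s^a))))
      (C * Real.exp (-(1/a) * r^a) * r^((m:ℝ)-1) *
        ((m:ℝ) * laguerre lam l ((2/a)*r^a)
          + (2 * lagD lam l ((2/a)*r^a) - laguerre lam l ((2/a)*r^a)) * r^a)) r := by
  have hrne := hr.ne'
  have hP : HasDerivAt (fun s : ℝ => s ^ (m:ℝ)) ((m:ℝ) * r ^ ((m:ℝ)-1)) r :=
    Real.hasDerivAt_rpow_const (Or.inl hrne)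
  have ht : HasDerivAt (fun s : ℝ => (2/a) * s^a) ((2/a) * (a * r^(a-1))) r :=
    (Real.hasDerivAt_rpow_const (Or.inl hrne)).const_mul _
  have hA : HasDerivAt (fun s : ℝ => laguerre lam l ((2/a) * s^a))
      (lagD lam l ((2/a)*r^a) * ((2/a) * (a * r^(a-1)))) r :=
    (hasDerivAt_laguerre lam l _).comp r ht
  have hE : HasDerivAt (fun s : ℝ => Real.exp (-(1/a) * s^a))
      (Real.exp (-(1/a)*r^a) * (-(1/a) * (a * r^(a-1)))) r :=
    (((Real.hasDerivAt_rpow_const (Or.inl hrne)).const_mul (-(1/a)))).exp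
  have h := (hP.mul (hA.mul hE)).const_mul C
  refine h.congr_deriv ?_
  have e1 : r ^ (m:ℝ) = r ^ ((m:ℝ)-1) * r := by
    rw [← Real.rpow_add_one hrne]; norm_num
  have e2 : r ^ a = r ^ (a-1) * r := by
    rw [← Real.rpow_add_one hrne]; norm_num
  simp only [Pi.mul_apply]
  rw [e1, e2]
  field_simp
  ring

lemma hasDerivAt_lagfun' (C lam a : ℝ) (ha : a ≠ 0) (m l : ℕ) (r : ℝ) (hr : 0 < r) :
    HasDerivAt
      (fun s : ℝ => C * Real.exp (-(1/a) * s^a) * s^((m:ℝ)-1) *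
        ((m:ℝ) * laguerre lam l ((2/a)*s^a)
          + (2 * lagD lam l ((2/a)*s^a) - laguerre lam l ((2/a)*s^a)) * s^a))
      (C * Real.exp (-(1/a)*r^a) *
        ((m:ℝ)*((m:ℝ)-1) * laguerre lam l ((2/a)*r^a) * r^((m:ℝ)-2)
          + ((4*m + 2*a - 2) * lagD lam l ((2/a)*r^a)
              - (2*m + a - 1) * laguerre lam l ((2/a)*r^a)) * r^((m:ℝ)+a-2)
          + (4 * lagD2 lam l ((2/a)*r^a) - 4 * lagD lam l ((2/a)*r^a)
              + laguerre lam l ((2/a)*r^a)) * r^((m:ℝ)+2*a-2))) r := by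
  have hrne := hr.ne'
  have hP : HasDerivAt (fun s : ℝ => s ^ ((m:ℝ)-1)) (((m:ℝ)-1) * r ^ ((m:ℝ)-1-1)) r :=
    Real.hasDerivAt_rpow_const (Or.inl hrne)
  have hR : HasDerivAt (fun s : ℝ => s ^ a) (a * r^(a-1)) r :=
    Real.hasDerivAt_rpow_const (Or.inl hrne)
  have ht : HasDerivAt (fun s : ℝ => (2/a) * s^a) ((2/a) * (a * r^(a-1))) r :=
    hR.const_mul _
  have hA : HasDerivAt (fun s : ℝ => laguerre lam l ((2/a) * s^a))
      (lagD lam l ((2/a)*r^a) * ((2/a) * (a * r^(a-1)))) r :=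
    (hasDerivAt_laguerre lam l _).comp r ht
  have hA1 : HasDerivAt (fun s : ℝ => lagD lam l ((2/a) * s^a))
      (lagD2 lam l ((2/a)*r^a) * ((2/a) * (a * r^(a-1)))) r :=
    (hasDerivAt_lagD lam l _).comp r ht
  have hE : HasDerivAt (fun s : ℝ => Real.exp (-(1/a) * s^a))
      (Real.exp (-(1/a)*r^a) * (-(1/a) * (a * r^(a-1)))) r :=
    ((Real.hasDerivAt_rpow_const (Or.inl hrne)).const_mul (-(1/a))).exp
  have hS : HasDerivAt
      (fun s : ℝ => (m:ℝ) * laguerre lam l ((2/a)*s^a)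
          + (2 * lagD lam l ((2/a)*s^a) - laguerre lam l ((2/a)*s^a)) * s^a)
      ((m:ℝ) * (lagD lam l ((2/a)*r^a) * ((2/a) * (a * r^(a-1))))
        + ((2 * (lagD2 lam l ((2/a)*r^a) * ((2/a) * (a * r^(a-1))))
              - lagD lam l ((2/a)*r^a) * ((2/a) * (a * r^(a-1)))) * r^a
            + (2 * lagD lam l ((2/a)*r^a) - laguerre lam l ((2/a)*r^a)) * (a * r^(a-1)))) r :=
    (hA.const_mul _).add (((hA1.const_mul 2).sub hA).mul hR)
  have h := ((hE.const_mul C).mul hP).mul hS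
  refine h.congr_deriv ?_
  have e3 : r ^ ((m:ℝ)-1-1) = r ^ ((m:ℝ)-2) := by congr 1; ring
  have e4 : r ^ ((m:ℝ)+a-2) = r ^ ((m:ℝ)-2) * r ^ (a-1) * r := by
    rw [show (m:ℝ)+a-2 = ((m:ℝ)-2)+(a-1)+1 by ring, Real.rpow_add hr, Real.rpow_add hr,
      Real.rpow_one]
  have e5 : r ^ ((m:ℝ)+2*a-2) = r ^ ((m:ℝ)-2) * r ^ (a-1) * r ^ (a-1) * r * r := by
    rw [show (m:ℝ)+2*a-2 = (((m:ℝ)-2)+(a-1))+((a-1)+1)+1 by ring, Real.rpow_add hr,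
      Real.rpow_add hr, Real.rpow_add hr, Real.rpow_add hr, Real.rpow_one]
    ring
  have e1 : r ^ ((m:ℝ)-1) = r ^ ((m:ℝ)-2) * r := by
    rw [← Real.rpow_add_one hrne]; congr 1; ring
  have e2 : r ^ a = r ^ (a-1) * r := by
    rw [← Real.rpow_add_one hrne]; norm_num
  simp only [Pi.mul_apply]
  rw [e4, e5, e3, e1, e2]
  field_simp
  ring

lemma big_algebra (C ν a : ℝ) (ha : a ≠ 0) (m l : ℕ) (r : ℝ) (hr : 0 < r) :
    -(1/2) * (((ν+a)/a) * (C * (r ^ (m:ℝ) *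
            (laguerre ((ν+2*m)/a) l ((2/a)*r^a) * Real.exp (-(1/a)*r^a))))
        + 2/a * r * (C * Real.exp (-(1/a)*r^a) * r^((m:ℝ)-1) *
            ((m:ℝ) * laguerre ((ν+2*m)/a) l ((2/a)*r^a)
              + (2 * lagD ((ν+2*m)/a) l ((2/a)*r^a)
                  - laguerre ((ν+2*m)/a) l ((2/a)*r^a)) * r^a)))
      - 1/(2*a) * r^a * (C * (r ^ (m:ℝ) *
          (laguerre ((ν+2*m)/a) l ((2/a)*r^a) * Real.exp (-(1/a)*r^a))))
      - 1/(2*a) * r^(-a) *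
          (r^2 * (C * Real.exp (-(1/a)*r^a) *
              ((m:ℝ)*((m:ℝ)-1) * laguerre ((ν+2*m)/a) l ((2/a)*r^a) * r^((m:ℝ)-2)
                + ((4*m+2*a-2) * lagD ((ν+2*m)/a) l ((2/a)*r^a)
                    - (2*m+a-1) * laguerre ((ν+2*m)/a) l ((2/a)*r^a)) * r^((m:ℝ)+a-2)
                + (4 * lagD2 ((ν+2*m)/a) l ((2/a)*r^a)
                    - 4 * lagD ((ν+2*m)/a) l ((2/a)*r^a)
                    + laguerre ((ν+2*m)/a) l ((2/a)*r^a)) * r^((m:ℝ)+2*a-2)))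
            + (ν+1) * r * (C * Real.exp (-(1/a)*r^a) * r^((m:ℝ)-1) *
                ((m:ℝ) * laguerre ((ν+2*m)/a) l ((2/a)*r^a)
                  + (2 * lagD ((ν+2*m)/a) l ((2/a)*r^a)
                      - laguerre ((ν+2*m)/a) l ((2/a)*r^a)) * r^a))
            - m*(ν+m) * (C * (r ^ (m:ℝ) *
                (laguerre ((ν+2*m)/a) l ((2/a)*r^a) * Real.exp (-(1/a)*r^a)))))
      = -(C * r ^ (m:ℝ) * Real.exp (-(1/a)*r^a)) *
          ((2/a) * r^a * lagD2 ((ν+2*m)/a) l ((2/a)*r^a)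
            + ((ν+2*m)/a + 1) * lagD ((ν+2*m)/a) l ((2/a)*r^a)) := by
  have hrne := hr.ne'
  have eneg : r ^ (-a) = (r ^ a)⁻¹ := Real.rpow_neg hr.le a
  have e4 : r ^ ((m:ℝ)+a-2) = r ^ ((m:ℝ)-2) * r ^ (a-1) * r := by
    rw [show (m:ℝ)+a-2 = ((m:ℝ)-2)+(a-1)+1 by ring, Real.rpow_add hr, Real.rpow_add hr,
      Real.rpow_one]
  have e5 : r ^ ((m:ℝ)+2*a-2) = r ^ ((m:ℝ)-2) * r ^ (a-1) * r ^ (a-1) * r * r := by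
    rw [show (m:ℝ)+2*a-2 = (((m:ℝ)-2)+(a-1))+((a-1)+1)+1 by ring, Real.rpow_add hr,
      Real.rpow_add hr, Real.rpow_add hr, Real.rpow_add hr, Real.rpow_one]
    ring
  have e1 : r ^ ((m:ℝ)-1) = r ^ ((m:ℝ)-2) * r := by
    rw [← Real.rpow_add_one hrne]; congr 1; ring
  have em : r ^ (m:ℝ) = r ^ ((m:ℝ)-2) * r * r := by
    rw [← Real.rpow_add_one hrne, ← Real.rpow_add_one hrne]; congr 1; ring
  have e2 : r ^ a = r ^ (a-1) * r := by
    rw [← Real.rpow_add_one hrne]; congr 1; ring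
  rw [eneg, e4, e5, em, e1, e2]
  have hQ : r ^ (a-1) ≠ 0 := (Real.rpow_pos_of_pos hr _).ne'
  field_simp
  ring


lemma Cconst_step (ν a : ℝ) (ha : 0 < a) (m : ℕ) (hlam : -1 < (ν + 2 * m) / a) (k : ℕ) :
    Real.sqrt ((2 : ℝ) ^ (((ν + 2 * m) / a) + 1) * (Nat.factorial (k + 1)) / (a ^ ((ν + 2 * m) / a) * Real.Gamma (((ν + 2 * m) / a) + ((k + 1) : ℕ) + 1))) * (((ν + 2 * m) / a) + k + 1)
      = Real.sqrt (((k + 1 : ℕ) : ℝ) * (((ν + 2 * m) / a) + ((k + 1 : ℕ) : ℝ))) * Real.sqrt ((2 : ℝ) ^ (((ν + 2 * m) / a) + 1) * (Nat.factorial k) / (a ^ ((ν + 2 * m) / a) * Real.Gamma (((ν + 2 * m) / a) + (k : ℕ) + 1))) := by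
  have hk1 : (0:ℝ) < ((ν + 2 * m) / a) + k + 1 := by
    have := Nat.cast_nonneg (α := ℝ) k; linarith
  have hG : 0 < Real.Gamma (((ν + 2 * m) / a) + k + 1) := Real.Gamma_pos_of_pos hk1
  have hGk1 : Real.Gamma (((ν + 2 * m) / a) + ((k + 1 : ℕ) : ℝ) + 1)
      = (((ν + 2 * m) / a) + k + 1) * Real.Gamma (((ν + 2 * m) / a) + k + 1) := by
    rw [show ((ν + 2 * m) / a) + ((k + 1 : ℕ) : ℝ) + 1 = (((ν + 2 * m) / a) + ↑k + 1) + 1 by push_cast; ring,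
      Real.Gamma_add_one hk1.ne']
  have h2p : (0:ℝ) < (2:ℝ) ^ (((ν + 2 * m) / a) + 1) := Real.rpow_pos_of_pos two_pos _
  have hap : (0:ℝ) < a ^ ((ν + 2 * m) / a) := Real.rpow_pos_of_pos ha _
  have hX : (0:ℝ) ≤ (2:ℝ) ^ (((ν + 2 * m) / a) + 1) * (Nat.factorial (k + 1)) /
      (a ^ ((ν + 2 * m) / a) * Real.Gamma (((ν + 2 * m) / a) + ((k + 1) : ℕ) + 1)) := by
    rw [hGk1]
    exact div_nonneg (by positivity) (mul_pos hap (mul_pos hk1 hG)).le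
  have hL : Real.sqrt ((2 : ℝ) ^ (((ν + 2 * m) / a) + 1) * (Nat.factorial (k + 1)) / (a ^ ((ν + 2 * m) / a) * Real.Gamma (((ν + 2 * m) / a) + ((k + 1) : ℕ) + 1))) * (((ν + 2 * m) / a) + k + 1)
      = Real.sqrt ((2:ℝ) ^ (((ν + 2 * m) / a) + 1) * (Nat.factorial (k + 1)) /
          (a ^ ((ν + 2 * m) / a) * Real.Gamma (((ν + 2 * m) / a) + ((k + 1) : ℕ) + 1)) * (((ν + 2 * m) / a) + k + 1) ^ 2) := by
    rw [Real.sqrt_mul hX, Real.sqrt_sq hk1.le]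
  have hY : (0:ℝ) ≤ ((k + 1 : ℕ) : ℝ) * (((ν + 2 * m) / a) + ((k + 1 : ℕ) : ℝ)) := by
    apply mul_nonneg (Nat.cast_nonneg _)
    push_cast
    linarith [Nat.cast_nonneg (α := ℝ) k]
  rw [hL, ← Real.sqrt_mul hY]
  congr 1
  rw [hGk1, Nat.factorial_succ]
  have h1 : Real.Gamma (((ν + 2 * m) / a) + k + 1) ≠ 0 := hG.ne'
  have hD1 : a ^ ((ν + 2 * m) / a) * ((((ν + 2 * m) / a) + ↑k + 1) * Real.Gamma (((ν + 2 * m) / a) + k + 1)) ≠ 0 :=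
    (mul_pos hap (mul_pos hk1 hG)).ne'
  have hD2 : a ^ ((ν + 2 * m) / a) * Real.Gamma (((ν + 2 * m) / a) + k + 1) ≠ 0 := (mul_pos hap hG).ne'
  push_cast
  rw [div_mul_eq_mul_div, mul_div_assoc', div_eq_div_iff hD1 hD2]
  ring

lemma real_master_zero (ν a : ℝ) (ha : a ≠ 0) (m : ℕ) (r : ℝ) (hr : 0 < r) :
    -(1 / 2) * (((ν + a) / a) * (Real.sqrt ((2 : ℝ) ^ (((ν + 2 * m) / a) + 1) * (Nat.factorial 0) / (a ^ ((ν + 2 * m) / a) * Real.Gamma (((ν + 2 * m) / a) + (0 : ℕ) + 1))) * (r ^ (m : ℝ) * (laguerre ((ν + 2 * m) / a) 0 ((2 / a) * r ^ a) * Real.exp (-(1 / a) * r ^ a)))) + 2 / a * r * (Real.sqrt ((2 : ℝ) ^ (((ν + 2 * m) / a) + 1) * (Nat.factorial 0) / (a ^ ((ν + 2 * m) / a) * Real.Gamma (((ν + 2 * m) / a) + (0 : ℕ) + 1))) * Real.exp (-(1 / a) * r ^ a) * r ^ ((m : ℝ) - 1) * ((m : ℝ) * laguerre ((ν + 2 *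 m) / a) 0 ((2 / a) * r ^ a) + (2 * lagD ((ν + 2 * m) / a) 0 ((2 / a) * r ^ a) - laguerre ((ν + 2 * m) / a) 0 ((2 / a) * r ^ a)) * r ^ a))) - 1 / (2 * a) * r ^ a * (Real.sqrt ((2 : ℝ) ^ (((ν + 2 * m) / a) + 1) * (Nat.factorial 0) / (a ^ ((ν + 2 * m) / a) * Real.Gamma (((ν + 2 * m) / a) + (0 : ℕ) + 1))) * (r ^ (m : ℝ) * (laguerre ((ν + 2 * m) / a) 0 ((2 / a) * r ^ a) * Real.exp (-(1 / a) * r ^ a)))) - 1 / (2 * a) * r ^ (-a) * (r ^ 2 * (Real.sqrt ((2 : ℝ) ^ (((ν + 2 * m) / a) + 1) * (Nat.factorial 0) / (a ^ ((ν + 2 * m) / a) * Real.Gamma (((ν + 2 * m) / a) + (0 : ℕ) + 1))) * Real.exp (-(1 / a) * r ^ a) * ((m : ℝ) * ((m : ℝ) - 1) * laguerre ((ν + 2 * m) / a) 0 ((2 / a) * r ^ a) * r ^ ((m : ℝ) - 2) + ((4 * m + 2 * a - 2) * lagD ((ν + 2 * m) / a) 0 ((2 / a) * r ^ a) - (2 *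 m + a - 1) * laguerre ((ν + 2 * m) / a) 0 ((2 / a) * r ^ a)) * r ^ ((m : ℝ) + a - 2) + (4 * lagD2 ((ν + 2 * m) / a) 0 ((2 / a) * r ^ a) - 4 * lagD ((ν + 2 * m) / a) 0 ((2 / a) * r ^ a) + laguerre ((ν + 2 * m) / a) 0 ((2 / a) * r ^ a)) * r ^ ((m : ℝ) + 2 * a - 2))) + (ν + 1) * r * (Real.sqrt ((2 : ℝ) ^ (((ν + 2 * m) / a) + 1) * (Nat.factorial 0) / (a ^ ((ν + 2 * m) / a) * Real.Gamma (((ν + 2 * m) / a) + (0 : ℕ) + 1))) * Real.exp (-(1 / a) * r ^ a) * r ^ ((m : ℝ) - 1) * ((m : ℝ) * laguerre ((ν + 2 * m) / a) 0 ((2 / a) * r ^ a) + (2 * lagD ((ν + 2 * m) / a) 0 ((2 / a) * r ^ a) - laguerre ((ν + 2 * m) / a) 0 ((2 / a) * r ^ a)) * r ^ a)) - m * (ν + m) * (Real.sqrt ((2 : ℝ) ^ (((ν + 2 * m) / a) + 1) * (Nat.factorial 0) / (a ^ ((ν + 2 * m) / a) * Real.Gamma (((ν + 2 * m) / a) + (0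 : ℕ) + 1))) * (r ^ (m : ℝ) * (laguerre ((ν + 2 * m) / a) 0 ((2 / a) * r ^ a) * Real.exp (-(1 / a) * r ^ a))))) = 0 := by
  have hX := big_algebra (Real.sqrt ((2 : ℝ) ^ (((ν + 2 * m) / a) + 1) * (Nat.factorial 0) / (a ^ ((ν + 2 * m) / a) * Real.Gamma (((ν + 2 * m) / a) + (0 : ℕ) + 1)))) ν a ha m 0 r hr
  refine hX.trans ?_
  rw [lagD_zero, lagD2_zero]
  ring

lemma real_master_succ (ν a : ℝ) (ha : 0 < a) (m : ℕ) (hlam : -1 < (ν + 2 * m) / a)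
    (k : ℕ) (r : ℝ) (hr : 0 < r) :
    -(1 / 2) * (((ν + a) / a) * (Real.sqrt ((2 : ℝ) ^ (((ν + 2 * m) / a) + 1) * (Nat.factorial (k + 1)) / (a ^ ((ν + 2 * m) / a) * Real.Gamma (((ν + 2 * m) / a) + ((k + 1) : ℕ) + 1))) * (r ^ (m : ℝ) * (laguerre ((ν + 2 * m) / a) (k + 1) ((2 / a) * r ^ a) * Real.exp (-(1 / a) * r ^ a)))) + 2 / a * r * (Real.sqrt ((2 : ℝ) ^ (((ν + 2 * m) / a) + 1) * (Nat.factorial (k + 1)) / (a ^ ((ν + 2 * m) / a) * Real.Gamma (((ν + 2 * m) / a) + ((k + 1) : ℕ) + 1))) * Real.exp (-(1 / a) * r ^ a) * r ^ ((m : ℝ) - 1) * ((m : ℝ) * laguerre ((ν + 2 * m) / a) (k + 1) ((2 / a) * r ^ a) + (2 * lagD ((ν + 2 * m) / a) (k + 1) ((2 / a) * r ^ a) - laguerre ((ν + 2 * m) / a) (k + 1) ((2 / a) * r ^ a)) * r ^ a))) - 1 / (2 * a) * r ^ a * (Real.sqrt ((2 : ℝ) ^ (((ν + 2 * m) / a)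 + 1) * (Nat.factorial (k + 1)) / (a ^ ((ν + 2 * m) / a) * Real.Gamma (((ν + 2 * m) / a) + ((k + 1) : ℕ) + 1))) * (r ^ (m : ℝ) * (laguerre ((ν + 2 * m) / a) (k + 1) ((2 / a) * r ^ a) * Real.exp (-(1 / a) * r ^ a)))) - 1 / (2 * a) * r ^ (-a) * (r ^ 2 * (Real.sqrt ((2 : ℝ) ^ (((ν + 2 * m) / a) + 1) * (Nat.factorial (k + 1)) / (a ^ ((ν + 2 * m) / a) * Real.Gamma (((ν + 2 * m) / a) + ((k + 1) : ℕ) + 1))) * Real.exp (-(1 / a) * r ^ a) * ((m : ℝ) * ((m : ℝ) - 1) * laguerre ((ν + 2 * m) / a) (k + 1) ((2 / a) * r ^ a) * r ^ ((m : ℝ) - 2) + ((4 * m + 2 * a - 2) * lagD ((ν + 2 * m) / a) (k + 1) ((2 / a) * r ^ a) - (2 * m + a - 1) * laguerre ((ν + 2 * m) / a) (k + 1) ((2 / a) * r ^ a)) * r ^ ((m : ℝ) + a - 2) + (4 * lagD2 ((ν + 2 * m) / a) (k + 1) ((2 / a) * r ^ a) - 4 * lagD ((ν + 2 * m) / a)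 (k + 1) ((2 / a) * r ^ a) + laguerre ((ν + 2 * m) / a) (k + 1) ((2 / a) * r ^ a)) * r ^ ((m : ℝ) + 2 * a - 2))) + (ν + 1) * r * (Real.sqrt ((2 : ℝ) ^ (((ν + 2 * m) / a) + 1) * (Nat.factorial (k + 1)) / (a ^ ((ν + 2 * m) / a) * Real.Gamma (((ν + 2 * m) / a) + ((k + 1) : ℕ) + 1))) * Real.exp (-(1 / a) * r ^ a) * r ^ ((m : ℝ) - 1) * ((m : ℝ) * laguerre ((ν + 2 * m) / a) (k + 1) ((2 / a) * r ^ a) + (2 * lagD ((ν + 2 * m) / a) (k + 1) ((2 / a) * r ^ a) - laguerre ((ν + 2 * m) / a) (k + 1) ((2 / a) * r ^ a)) * r ^ a)) - m * (ν + m) * (Real.sqrt ((2 : ℝ) ^ (((ν + 2 * m) / a) + 1) * (Nat.factorial (k + 1)) / (a ^ ((ν + 2 * m) / a) * Real.Gamma (((ν + 2 * m) / a) + ((k + 1) : ℕ) + 1))) * (r ^ (m : ℝ) * (laguerre ((ν + 2 * m) / a) (k + 1) ((2 / a) * r ^ a) * Real.exp (-(1 / a) * r ^ a)))))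
      = Real.sqrt (((k + 1 : ℕ) : ℝ) * (((ν + 2 * m) / a) + ((k + 1 : ℕ) : ℝ))) * (Real.sqrt ((2 : ℝ) ^ (((ν + 2 * m) / a) + 1) * (Nat.factorial k) / (a ^ ((ν + 2 * m) / a) * Real.Gamma (((ν + 2 * m) / a) + (k : ℕ) + 1))) * (r ^ (m : ℝ) * (laguerre ((ν + 2 * m) / a) k ((2 / a) * r ^ a) * Real.exp (-(1 / a) * r ^ a)))) := by
  have hX := big_algebra (Real.sqrt ((2 : ℝ) ^ (((ν + 2 * m) / a) + 1) * (Nat.factorial (k + 1)) / (a ^ ((ν + 2 * m) / a) * Real.Gamma (((ν + 2 * m) / a) + ((k + 1) : ℕ) + 1)))) ν a ha.ne' m (k + 1) r hr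
  refine hX.trans ?_
  rw [lag_key ((ν + 2 * m) / a) hlam k ((2 / a) * r ^ a)]
  have hstep := Cconst_step ν a ha m hlam k
  linear_combination (r ^ (m : ℝ) * Real.exp (-(1 / a) * r ^ a) * laguerre ((ν + 2 * m) / a) k ((2 / a) * r ^ a)) * hstep

/-- The lowering operator `π(𝐧⁻) = -(i/2) H_a - (1/2) E⁺_a - (1/2) E⁻_{a,m}` sends
`f_l` to `i √(l(λ+l)) f_{l-1}`, where `λ = (ν + 2m)/a` and `f_{-1} = 0`. -/
theorem laguerreFun_lowering (ν a : ℝ) (ha : 0 < a) (m : ℕ)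
    (hlam : -1 < (ν + 2 * m) / a) (l : ℕ) (r : ℝ) (hr : 0 < r) :
    -(Complex.I / 2) *
        ((((ν : ℂ) + a) / a) * laguerreFun ν a m l r +
          2 / (a : ℂ) * (r : ℂ) * deriv (laguerreFun ν a m l) r) -
      Complex.I / (2 * a) * ((r ^ a : ℝ) : ℂ) * laguerreFun ν a m l r -
      Complex.I / (2 * a) * ((r ^ (-a) : ℝ) : ℂ) *
        ((r : ℂ) ^ 2 * deriv (deriv (laguerreFun ν a m l)) r +
          ((ν : ℂ) + 1) * (r : ℂ) * deriv (laguerreFun ν a m l) r -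
          (m : ℂ) * ((ν : ℂ) + (m : ℂ)) * laguerreFun ν a m l r)
      = Complex.I *
          (Real.sqrt (l * ((ν + 2 * m) / a + l)) : ℝ) *
          laguerreFun ν a m ((l : ℤ) - 1) r := by
  have hfun : ∀ (n : ℕ) (s : ℝ), 0 < s → laguerreFun ν a m (n : ℤ) s =
      ((Real.sqrt ((2 : ℝ) ^ (((ν + 2 * m) / a) + 1) * (Nat.factorial n) / (a ^ ((ν + 2 * m) / a) * Real.Gamma (((ν + 2 * m) / a) + (n : ℕ) + 1))) * (s ^ (m : ℝ) * (laguerre ((ν + 2 * m) / a) n ((2 / a) * s ^ a) * Real.exp (-(1 / a) * s ^ a))) : ℝ) : ℂ) := by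
    intro n s hs
    rw [laguerreFun, if_neg (not_lt.2 (Int.natCast_nonneg n))]
    simp only [Int.toNat_natCast]
    congr 1
    rw [Real.rpow_natCast]
    ring
  have hder : ∀ s : ℝ, 0 < s → HasDerivAt (laguerreFun ν a m (l : ℤ))
      ((Real.sqrt ((2 : ℝ) ^ (((ν + 2 * m) / a) + 1) * (Nat.factorial l) / (a ^ ((ν + 2 * m) / a) * Real.Gamma (((ν + 2 * m) / a) + (l : ℕ) + 1))) * Real.exp (-(1 / a) * s ^ a) * s ^ ((m : ℝ) - 1) * ((m : ℝ) * laguerre ((ν + 2 * m) / a) l ((2 / a) * s ^ a) + (2 * lagD ((ν + 2 * m) / a) l ((2 / a) * s ^ a) - laguerre ((ν + 2 * m) / a) l ((2 / a) * s ^ a)) * s ^ a) : ℝ) : ℂ) s := by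
    intro s hs
    refine HasDerivAt.congr_of_eventuallyEq
      ((hasDerivAt_lagfun (Real.sqrt ((2 : ℝ) ^ (((ν + 2 * m) / a) + 1) * (Nat.factorial l) / (a ^ ((ν + 2 * m) / a) * Real.Gamma (((ν + 2 * m) / a) + (l : ℕ) + 1)))) ((ν + 2 * m) / a) a ha.ne' m l s hs).ofReal_comp) ?_
    filter_upwards [Ioi_mem_nhds hs] with x hx
    exact hfun l x hx
  have hev : deriv (laguerreFun ν a m (l : ℤ)) =ᶠ[nhds r]
      fun s : ℝ => ((Real.sqrt ((2 : ℝ) ^ (((ν + 2 * m) / a) + 1) * (Nat.factorial l) / (a ^ ((ν + 2 * m) / a) * Real.Gamma (((ν + 2 * m) / a) + (l : ℕ) + 1))) * Real.exp (-(1 / a) * s ^ a) * s ^ ((m : ℝ) - 1) * ((m : ℝ) * laguerre ((ν + 2 * m) / a) l ((2 / a) * s ^ a) + (2 * lagD ((ν + 2 * m) / a) l ((2 / a) * s ^ a) - laguerre ((ν + 2 * m) / a) l ((2 / a) * s ^ a)) * s ^ a) : ℝ) : ℂ) := by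
    filter_upwards [Ioi_mem_nhds hr] with x hx
    exact (hder x hx).deriv
  have hD2 : deriv (deriv (laguerreFun ν a m (l : ℤ))) r = ((Real.sqrt ((2 : ℝ) ^ (((ν + 2 * m) / a) + 1) * (Nat.factorial l) / (a ^ ((ν + 2 * m) / a) * Real.Gamma (((ν + 2 * m) / a) + (l : ℕ) + 1))) * Real.exp (-(1 / a) * r ^ a) * ((m : ℝ) * ((m : ℝ) - 1) * laguerre ((ν + 2 * m) / a) l ((2 / a) * r ^ a) * r ^ ((m : ℝ) - 2) + ((4 * m + 2 * a - 2) * lagD ((ν + 2 * m) / a) l ((2 / a) * r ^ a) - (2 * m + a - 1) * laguerre ((ν + 2 * m) / a) l ((2 / a) * r ^ a)) * r ^ ((m : ℝ) + a - 2) + (4 * lagD2 ((ν + 2 * m) / a) l ((2 / a) * r ^ a) - 4 * lagD ((ν + 2 * m) / a) l ((2 / a) * r ^ a) + laguerre ((ν + 2 * m) / a) l ((2 / a) * r ^ a)) * r ^ ((m : ℝ) + 2 * a - 2)) : ℝ) : ℂ) := by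
    rw [hev.deriv_eq]
    exact ((hasDerivAt_lagfun' (Real.sqrt ((2 : ℝ) ^ (((ν + 2 * m) / a) + 1) * (Nat.factorial l) / (a ^ ((ν + 2 * m) / a) * Real.Gamma (((ν + 2 * m) / a) + (l : ℕ) + 1)))) ((ν + 2 * m) / a) a ha.ne' m l r
      hr).ofReal_comp).deriv
  rw [hfun l r hr, (hder r hr).deriv, hD2]
  cases l with
  | zero =>
    have hXC := congrArg (Complex.ofReal) (real_master_zero ν a ha.ne' m r hr)
    have hneg : laguerreFun ν a m (((0 : ℕ) : ℤ) - 1) r = 0 := by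
      rw [laguerreFun]; norm_num
    rw [hneg, mul_zero]
    push_cast at hXC ⊢
    linear_combination Complex.I * hXC
  | succ k =>
    have hXC := congrArg (Complex.ofReal) (real_master_succ ν a ha m hlam k r hr)
    rw [show ((k + 1 : ℕ) : ℤ) - 1 = (k : ℤ) by push_cast; ring, hfun k r hr]
    push_cast at hXC ⊢
    linear_combination Complex.I * hXC
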